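/- Let G = (V, E) be a finite simple undirected graph with independence number α₁, let k ≥ 1 and m ≥ 1 be integers, let q : V → [0, 1], and let x : {1,...,k} × V → [0, 1] satisfy ∑_{i=1}^k x(i, v) ≤ m for every v ∈ V. For each i ∈ {1,...,k} and v ∈ V define B̄(i, v) := 1 − ∏_{w ∈ N(v)} (1 − x(i, w)·q(w)), where N(v) is the closed neighborhood of v (with the convention that a summand x(i,v)·q(v)/B̄(i,v) is 0 when x(i,v)·q(v) = 0). Then ∑_{i=1}^k ∑_{v ∈ V} x(i, v)·q(v) / B̄(i, v) ≤ (1/(1 − e^{−1})) · ( k·α₁ + m·∑_{v ∈ V} q(v) ). -/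
import Mathlib


open Finset

private lemma graph_lemma_aux {V : Type*} [Fintype V] [DecidableEq V] (G : SimpleGraph V)
    [DecidableRel G.Adj] (a : V → ℝ) (ha : ∀ v, 0 ≤ a v) :
    ∀ (N : ℕ) (S : Finset V), S.card ≤ N → ∀ (n : ℕ),
      (∀ T ⊆ S, (∀ v ∈ T, ∀ w ∈ T, ¬ G.Adj v w) → T.card ≤ n) →
      ∑ v ∈ S, a v / (∑ w ∈ (insert v (G.neighborFinset v)) ∩ S, a w) ≤ (n : ℝ) := by
  intro N
  induction N with
  | zero =>
    intro S hS n _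
    have : S = ∅ := Finset.card_eq_zero.mp (Nat.le_zero.mp hS)
    simp [this]
  | succ N ih =>
    intro S hS n hind
    by_cases hall : ∀ v ∈ S, a v = 0
    · have : ∀ v ∈ S, a v / (∑ w ∈ (insert v (G.neighborFinset v)) ∩ S, a w) = 0 := by
        intro v hv; rw [hall v hv, zero_div]
      rw [Finset.sum_congr rfl this]
      simp
    · push_neg at hall
      obtain ⟨v₀, hv₀S, hv₀⟩ := hall
      have hv₀pos : 0 < a v₀ := lt_of_le_of_ne (ha v₀) (Ne.symm hv₀)
      set P : Finset V := S.filter (fun v => 0 < a v) with hP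
      have hPne : P.Nonempty := ⟨v₀, Finset.mem_filter.mpr ⟨hv₀S, hv₀pos⟩⟩
      obtain ⟨v₁, hv₁P, hv₁min⟩ := P.exists_min_image
        (fun v => ∑ w ∈ (insert v (G.neighborFinset v)) ∩ S, a w) hPne
      have hv₁S : v₁ ∈ S := (Finset.mem_filter.mp hv₁P).1
      have hv₁pos : 0 < a v₁ := (Finset.mem_filter.mp hv₁P).2
      set Nv : Finset V := insert v₁ (G.neighborFinset v₁) with hNv
      set A₁ : ℝ := ∑ w ∈ Nv ∩ S, a w with hA₁
      have hv₁Nv : v₁ ∈ Nv := Finset.mem_insert_self _ _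
      have hA₁ge : a v₁ ≤ A₁ :=
        Finset.single_le_sum (fun w _ => ha w) (Finset.mem_inter.mpr ⟨hv₁Nv, hv₁S⟩)
      have hA₁pos : 0 < A₁ := lt_of_lt_of_le hv₁pos hA₁ge
      -- n ≥ 1
      have hn1 : 1 ≤ n := by
        have := hind {v₁} (Finset.singleton_subset_iff.mpr hv₁S) ?_
        · simpa using this
        · intro v hv w hw
          rw [Finset.mem_singleton] at hv hw
          subst hv; subst hw; exact G.irrefl
      obtain ⟨n', rfl⟩ : ∃ n', n = n' + 1 := ⟨n - 1, (Nat.succ_pred_eq_of_pos hn1).symm⟩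
      -- split the sum
      rw [← Finset.sum_inter_add_sum_sdiff S Nv
        (fun v => a v / (∑ w ∈ (insert v (G.neighborFinset v)) ∩ S, a w))]
      have hpart1 : ∑ v ∈ S ∩ Nv, a v / (∑ w ∈ (insert v (G.neighborFinset v)) ∩ S, a w) ≤ 1 := by
        have hterm : ∀ v ∈ S ∩ Nv,
            a v / (∑ w ∈ (insert v (G.neighborFinset v)) ∩ S, a w) ≤ a v / A₁ := by
          intro v hv
          have hvS : v ∈ S := (Finset.mem_inter.mp hv).1
          rcases eq_or_lt_of_le (ha v) with h0 | h0
          · rw [← h0, zero_div, zero_div]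
          · have hvP : v ∈ P := Finset.mem_filter.mpr ⟨hvS, h0⟩
            have hmin := hv₁min v hvP
            exact div_le_div_of_nonneg_left (ha v) hA₁pos hmin
        calc ∑ v ∈ S ∩ Nv, a v / (∑ w ∈ (insert v (G.neighborFinset v)) ∩ S, a w)
            ≤ ∑ v ∈ S ∩ Nv, a v / A₁ := Finset.sum_le_sum hterm
          _ = (∑ v ∈ S ∩ Nv, a v) / A₁ := by rw [Finset.sum_div]
          _ = A₁ / A₁ := by rw [hA₁, Finset.inter_comm]
          _ = 1 := div_self (ne_of_gt hA₁pos)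
      have hpart2 : ∑ v ∈ S \ Nv, a v / (∑ w ∈ (insert v (G.neighborFinset v)) ∩ S, a w)
          ≤ (n' : ℝ) := by
        set S' : Finset V := S \ Nv with hS'
        have hS'card : S'.card ≤ N := by
          have hlt : S'.card < S.card := by
            apply Finset.card_lt_card
            constructor
            · exact Finset.sdiff_subset
            · intro hsub
              have := hsub hv₁S
              rw [Finset.mem_sdiff] at this
              exact this.2 hv₁Nv
          omega
        have hind' : ∀ T ⊆ S', (∀ v ∈ T, ∀ w ∈ T, ¬ G.Adj v w) → T.card ≤ n' := by
          intro T hT hTind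
          have hv₁T : v₁ ∉ T := by
            intro h
            have := hT h
            rw [Finset.mem_sdiff] at this
            exact this.2 hv₁Nv
          have hnadj : ∀ u ∈ T, ¬ G.Adj v₁ u := by
            intro u hu hadj
            have huS' := hT hu
            rw [Finset.mem_sdiff] at huS'
            apply huS'.2
            exact Finset.mem_insert_of_mem ((SimpleGraph.mem_neighborFinset _ _ _).mpr hadj)
          have hTS : insert v₁ T ⊆ S := by
            intro u hu
            rcases Finset.mem_insert.mp hu with h | h
            · subst h; exact hv₁S
            · exact (Finset.mem_sdiff.mp (hT h)).1
          have hTindS : ∀ v ∈ insert v₁ T, ∀ w ∈ insert v₁ T, ¬ G.Adj v w := by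
            intro v hv w hw
            rcases Finset.mem_insert.mp hv with h | h <;>
              rcases Finset.mem_insert.mp hw with h' | h'
            · subst h; subst h'; exact G.irrefl
            · subst h; exact hnadj w h'
            · subst h'; intro hadj; exact hnadj v h hadj.symm
            · exact hTind v h w h'
          have := hind (insert v₁ T) hTS hTindS
          rw [Finset.card_insert_of_notMem hv₁T] at this
          omega
        have hterm : ∀ v ∈ S', a v / (∑ w ∈ (insert v (G.neighborFinset v)) ∩ S, a w)
            ≤ a v / (∑ w ∈ (insert v (G.neighborFinset v)) ∩ S', a w) := by
          intro v hv
          rcases eq_or_lt_of_le (ha v) with h0 | h0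
          · rw [← h0, zero_div, zero_div]
          · have hvS' : v ∈ (insert v (G.neighborFinset v)) ∩ S' :=
              Finset.mem_inter.mpr ⟨Finset.mem_insert_self _ _, hv⟩
            have hApos : 0 < ∑ w ∈ (insert v (G.neighborFinset v)) ∩ S', a w :=
              lt_of_lt_of_le h0 (Finset.single_le_sum (fun w _ => ha w) hvS')
            have hsub : (insert v (G.neighborFinset v)) ∩ S'
                ⊆ (insert v (G.neighborFinset v)) ∩ S :=
              Finset.inter_subset_inter_left Finset.sdiff_subset
            have hle : ∑ w ∈ (insert v (G.neighborFinset v)) ∩ S', a w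
                ≤ ∑ w ∈ (insert v (G.neighborFinset v)) ∩ S, a w :=
              Finset.sum_le_sum_of_subset_of_nonneg hsub (fun w _ _ => ha w)
            exact div_le_div_of_nonneg_left (ha v) hApos hle
        calc ∑ v ∈ S', a v / (∑ w ∈ (insert v (G.neighborFinset v)) ∩ S, a w)
            ≤ ∑ v ∈ S', a v / (∑ w ∈ (insert v (G.neighborFinset v)) ∩ S', a w) :=
              Finset.sum_le_sum hterm
          _ ≤ (n' : ℝ) := ih S' hS'card n' hind'
      push_cast
      linarith

private lemma exp_min_lemma {ι : Type*} (s : Finset ι) (p : ι → ℝ)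
    (h0 : ∀ w ∈ s, 0 ≤ p w) (h1 : ∀ w ∈ s, p w ≤ 1) :
    (1 - Real.exp (-1)) * min 1 (∑ w ∈ s, p w) ≤ 1 - ∏ w ∈ s, (1 - p w) := by
  set s₀ : ℝ := ∑ w ∈ s, p w with hs₀
  have hs₀nn : 0 ≤ s₀ := Finset.sum_nonneg h0
  have hprod : ∏ w ∈ s, (1 - p w) ≤ Real.exp (-s₀) := by
    calc ∏ w ∈ s, (1 - p w) ≤ ∏ w ∈ s, Real.exp (-(p w)) := by
          apply Finset.prod_le_prod
          · intro w hw; linarith [h1 w hw]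
          · intro w hw; linarith [Real.add_one_le_exp (-(p w))]
      _ = Real.exp (∑ w ∈ s, -(p w)) := (Real.exp_sum s (fun w => -(p w))).symm
      _ = Real.exp (-s₀) := by rw [← Finset.sum_neg_distrib]
  have hB : (1 - Real.exp (-1)) * min 1 s₀ ≤ 1 - Real.exp (-s₀) := by
    rcases le_or_gt s₀ 1 with hle | hlt
    · rw [min_eq_right hle]
      have hconv := convexOn_exp.2 (Set.mem_univ (0 : ℝ)) (Set.mem_univ (-1 : ℝ))
        (by linarith : (0:ℝ) ≤ 1 - s₀) hs₀nn (by ring)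
      simp only [smul_eq_mul, mul_zero, zero_add, Real.exp_zero, mul_neg, mul_one] at hconv
      -- hconv : Real.exp (-s₀) ≤ (1 - s₀) * 1 + s₀ * Real.exp (-1)
      nlinarith
    · rw [min_eq_left (le_of_lt hlt)]
      have : Real.exp (-s₀) ≤ Real.exp (-1) := Real.exp_le_exp.mpr (by linarith)
      linarith
  linarith

theorem stmt13 {V : Type*} [Fintype V] [DecidableEq V] (G : SimpleGraph V) [DecidableRel G.Adj]
    (α₁ : ℕ)
    (hα : IsGreatest
      {n : ℕ | ∃ s : Finset V, s.card = n ∧ ∀ v ∈ s, ∀ w ∈ s, ¬ G.Adj v w} α₁)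
    (k m : ℕ) (hk : 1 ≤ k) (hm : 1 ≤ m)
    (q : V → ℝ) (hq : ∀ v, q v ∈ Set.Icc (0 : ℝ) 1)
    (x : Fin k → V → ℝ) (hx : ∀ i v, x i v ∈ Set.Icc (0 : ℝ) 1)
    (hxm : ∀ v, ∑ i, x i v ≤ (m : ℝ))
    (B : Fin k → V → ℝ)
    (hBdef : ∀ i v, B i v = 1 - ∏ w ∈ insert v (G.neighborFinset v), (1 - x i w * q w)) :
    ∑ i, ∑ v, x i v * q v / B i v
      ≤ (1 / (1 - Real.exp (-1))) * ((k : ℝ) * α₁ + (m : ℝ) * ∑ v, q v) := by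
  have he : Real.exp (-1) < 1 := by
    calc Real.exp (-1) < Real.exp 0 := Real.exp_lt_exp.mpr (by norm_num)
      _ = 1 := Real.exp_zero
  have hepos : 0 < 1 - Real.exp (-1) := by linarith
  set c : ℝ := 1 / (1 - Real.exp (-1)) with hc
  have hcpos : 0 < c := by positivity
  -- per-stage bound
  have key : ∀ i : Fin k, ∑ v, x i v * q v / B i v
      ≤ c * ((α₁ : ℝ) + ∑ v, x i v * q v) := by
    intro i
    set a : V → ℝ := fun v => x i v * q v with haa
    have ha : ∀ v, 0 ≤ a v := fun v => mul_nonneg (hx i v).1 (hq v).1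
    have ha1 : ∀ v, a v ≤ 1 := fun v =>
      mul_le_one₀ (hx i v).2 (hq v).1 (hq v).2
    set A : V → ℝ := fun v => ∑ w ∈ insert v (G.neighborFinset v), a w with hA
    have hterm : ∀ v, a v / B i v ≤ c * (a v / A v + a v) := by
      intro v
      rcases eq_or_lt_of_le (ha v) with h0 | h0
      · rw [← h0, zero_div, zero_div, add_zero, mul_zero]
      · have hAv : a v ≤ A v :=
          Finset.single_le_sum (fun w _ => ha w) (Finset.mem_insert_self v _)
        have hApos : 0 < A v := lt_of_lt_of_le h0 hAv
        have hmin : 0 < min 1 (A v) := lt_min one_pos hApos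
        have hBlb : (1 - Real.exp (-1)) * min 1 (A v) ≤ B i v := by
          rw [hBdef i v]
          exact exp_min_lemma _ a (fun w _ => ha w) (fun w _ => ha1 w)
        have hBpos : 0 < (1 - Real.exp (-1)) * min 1 (A v) := mul_pos hepos hmin
        have h1 : a v / B i v ≤ a v / ((1 - Real.exp (-1)) * min 1 (A v)) :=
          div_le_div_of_nonneg_left (ha v) hBpos hBlb
        have h2 : a v / ((1 - Real.exp (-1)) * min 1 (A v)) = c * (a v / min 1 (A v)) := by
          rw [hc]; field_simp
        have h3 : a v / min 1 (A v) ≤ a v / A v + a v := by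
          rcases le_total (A v) 1 with hle | hge
          · rw [min_eq_right hle]
            linarith [ha v]
          · rw [min_eq_left hge]
            have : 0 ≤ a v / A v := div_nonneg (ha v) (le_of_lt hApos)
            rw [div_one]
            linarith
        calc a v / B i v ≤ c * (a v / min 1 (A v)) := by rw [← h2]; exact h1
          _ ≤ c * (a v / A v + a v) := by
              apply mul_le_mul_of_nonneg_left h3 (le_of_lt hcpos)
    have hgraph : ∑ v, a v / A v ≤ (α₁ : ℝ) := by
      have := graph_lemma_aux G a ha (Finset.univ.card) Finset.univ le_rfl α₁
        (fun T _ hT => hα.2 ⟨T, rfl, hT⟩)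
      simp only [Finset.inter_univ] at this
      exact this
    calc ∑ v, a v / B i v ≤ ∑ v, c * (a v / A v + a v) :=
          Finset.sum_le_sum (fun v _ => hterm v)
      _ = c * ((∑ v, a v / A v) + ∑ v, a v) := by
          rw [← Finset.mul_sum, Finset.sum_add_distrib]
      _ ≤ c * ((α₁ : ℝ) + ∑ v, a v) := by
          apply mul_le_mul_of_nonneg_left _ (le_of_lt hcpos)
          linarith
  have hsum2 : ∑ i : Fin k, ∑ v, x i v * q v ≤ (m : ℝ) * ∑ v, q v := by
    rw [Finset.sum_comm]
    calc ∑ v, ∑ i : Fin k, x i v * q v = ∑ v, (∑ i : Fin k, x i v) * q v := by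
          simp [Finset.sum_mul]
      _ ≤ ∑ v, (m : ℝ) * q v := by
          apply Finset.sum_le_sum
          intro v _
          exact mul_le_mul_of_nonneg_right (hxm v) (hq v).1
      _ = (m : ℝ) * ∑ v, q v := by rw [Finset.mul_sum]
  calc ∑ i, ∑ v, x i v * q v / B i v
      ≤ ∑ i : Fin k, c * ((α₁ : ℝ) + ∑ v, x i v * q v) :=
        Finset.sum_le_sum (fun i _ => key i)
    _ = c * ((k : ℝ) * α₁ + ∑ i : Fin k, ∑ v, x i v * q v) := by
        rw [← Finset.mul_sum, Finset.sum_add_distrib, Finset.sum_const, Finset.card_univ,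
          Fintype.card_fin, nsmul_eq_mul]
    _ ≤ c * ((k : ℝ) * α₁ + (m : ℝ) * ∑ v, q v) := by
        apply mul_le_mul_of_nonneg_left _ (le_of_lt hcpos)
        linarith
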